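/- Let n ≥ q ≥ 1, let θ ∈ [−π, π] with θ ≠ 0, let 0 < s⁻ ≤ s⁺, let G be an n×q complex matrix satisfying s⁻·I_q ⪯ (1/n)·G*G ⪯ s⁺·I_q, let d₁, …, d_q ∈ [0, 1/2), and set D̄(θ) = diag(|1 − e^{−iθ}|^{−d₁}, …, |1 − e^{−iθ}|^{−d_q}) and Σ_χ(θ) = G·D̄(θ)²·G*. Then for each r = 1, …, q one has n·s⁻·μ_r(θ) ≤ λ_r(Σ_χ(θ)) ≤ n·s⁺·μ_r(θ), where μ_r(θ) denotes the r-th largest element of the list (|1 − e^{−iθ}|^{−2d₁}, …, |1 − e^{−iθ}|^{−2d_q}); moreover λ_r(Σ_χ(θ)) = 0 for r = q+1, …, n. -/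

import Mathlib

open Matrix
open scoped Real Matrix.Norms.L2Operator ComplexOrder

/-- The `r`-th largest value (1-indexed, counted with multiplicity) of a finite family of reals. -/
noncomputable def nthLargest {m : ℕ} (f : Fin m → ℝ) (r : ℕ) : ℝ :=
  (((Finset.univ.val.map f).sort (· ≤ ·)).reverse).getD (r - 1) 0

/-- The `r`-th largest eigenvalue (1-indexed, counted with multiplicity) of a Hermitian matrix
(junk value `0` if the matrix is not Hermitian). -/
noncomputable def eigsDesc {n : ℕ} (A : Matrix (Fin n) (Fin n) ℂ) (r : ℕ) : ℝ :=
  if h : A.IsHermitian then nthLargest h.eigenvalues r else 0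

namespace NthL
variable {m : ℕ} (f : Fin m → ℝ)

noncomputable def L : List ℝ := (Finset.univ.val.map f).sort (· ≤ ·)

lemma length_L : (L f).length = m := by simp [L, Multiset.length_sort]

lemma sorted_L : List.Pairwise (· ≤ ·) (L f) := Multiset.pairwise_sort _ _

lemma coe_L : ((L f : List ℝ) : Multiset ℝ) = Finset.univ.val.map f := Multiset.sort_eq _ _

lemma getElem_le_getElem {i j : ℕ} (hij : i ≤ j) (hj : j < (L f).length) :
    (L f)[i]'(lt_of_le_of_lt hij hj) ≤ (L f)[j] := by
  have := (sorted_L f).rel_get_of_le (a := ⟨i, lt_of_le_of_lt hij hj⟩) (b := ⟨j, hj⟩) hij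
  simpa [List.get_eq_getElem] using this

lemma nthLargest_eq_get {r : ℕ} (h1 : 1 ≤ r) (h2 : r ≤ m) :
    nthLargest f r = (L f)[m - r]'(by rw [length_L]; omega) := by
  have h0 : nthLargest f r = (L f).reverse.getD (r - 1) 0 := rfl
  have hlen : (L f).reverse.length = m := by rw [List.length_reverse, length_L]
  have hr : r - 1 < (L f).reverse.length := by omega
  rw [h0, List.getD_eq_getElem _ _ hr, List.getElem_reverse]
  congr 1
  rw [length_L]; omega

lemma nthLargest_mem {r : ℕ} (h1 : 1 ≤ r) (h2 : r ≤ m) : ∃ i, nthLargest f r = f i := by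
  rw [nthLargest_eq_get f h1 h2]
  have h : (L f)[m - r]'(by rw [length_L]; omega) ∈ L f := List.getElem_mem _
  rw [← Multiset.mem_coe, coe_L] at h
  obtain ⟨i, _, hi⟩ := Multiset.mem_map.mp h
  exact ⟨i, hi.symm⟩

lemma card_le_filter_ge {r : ℕ} (h1 : 1 ≤ r) (h2 : r ≤ m) :
    r ≤ (Finset.univ.filter (fun i => nthLargest f r ≤ f i)).card := by
  classical
  set t := nthLargest f r with ht
  have hcard : (Finset.univ.filter (fun i => t ≤ f i)).card
      = Multiset.countP (fun x => t ≤ x) (Finset.univ.val.map f) := by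
    rw [Multiset.countP_map]; rfl
  rw [hcard, ← coe_L f, Multiset.coe_countP]
  have hL := length_L f
  have hdec : L f = (L f).take (m - r) ++ (L f).drop (m - r) := (List.take_append_drop _ _).symm
  conv_rhs => rw [hdec]
  rw [List.countP_append]
  have hlen : ((L f).drop (m - r)).length = r := by rw [List.length_drop, hL]; omega
  have hall : ∀ a ∈ (L f).drop (m - r), (fun b => decide (t ≤ b)) a = true := by
    intro a ha
    simp only [decide_eq_true_eq]
    obtain ⟨j, hj, rfl⟩ := List.mem_iff_getElem.mp ha
    rw [List.getElem_drop]
    rw [ht, nthLargest_eq_get f h1 h2]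
    exact getElem_le_getElem f (Nat.le_add_right _ _) (by omega)
  have := List.countP_eq_length.mpr hall
  omega

lemma card_le_filter_le {r : ℕ} (h1 : 1 ≤ r) (h2 : r ≤ m) :
    m - r + 1 ≤ (Finset.univ.filter (fun i => f i ≤ nthLargest f r)).card := by
  classical
  set t := nthLargest f r with ht
  have hcard : (Finset.univ.filter (fun i => f i ≤ t)).card
      = Multiset.countP (fun x => x ≤ t) (Finset.univ.val.map f) := by
    rw [Multiset.countP_map]; rfl
  rw [hcard, ← coe_L f, Multiset.coe_countP]
  have hL := length_L f
  have hdec : L f = (L f).take (m - r + 1) ++ (L f).drop (m - r + 1) := (List.take_append_drop _ _).symm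
  conv_rhs => rw [hdec]
  rw [List.countP_append]
  have hlen : ((L f).take (m - r + 1)).length = m - r + 1 := by
    rw [List.length_take, hL]; omega
  have hall : ∀ a ∈ (L f).take (m - r + 1), (fun b => decide (b ≤ t)) a = true := by
    intro a ha
    simp only [decide_eq_true_eq]
    obtain ⟨j, hj, rfl⟩ := List.mem_iff_getElem.mp ha
    rw [List.getElem_take]
    rw [ht, nthLargest_eq_get f h1 h2]
    exact getElem_le_getElem f (by omega) (by omega)
  have := List.countP_eq_length.mpr hall
  omega

lemma exists_top {r : ℕ} (h1 : 1 ≤ r) (h2 : r ≤ m) :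
    ∃ S : Finset (Fin m), S.card = r ∧ ∀ i ∈ S, nthLargest f r ≤ f i := by
  classical
  obtain ⟨S, hS, hc⟩ := Finset.exists_subset_card_eq (card_le_filter_ge f h1 h2)
  exact ⟨S, hc, fun i hi => (Finset.mem_filter.mp (hS hi)).2⟩

lemma exists_bot {r : ℕ} (h1 : 1 ≤ r) (h2 : r ≤ m) :
    ∃ S : Finset (Fin m), S.card = m - r + 1 ∧ ∀ i ∈ S, f i ≤ nthLargest f r := by
  classical
  obtain ⟨S, hS, hc⟩ := Finset.exists_subset_card_eq (card_le_filter_le f h1 h2)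
  exact ⟨S, hc, fun i hi => (Finset.mem_filter.mp (hS hi)).2⟩

end NthL


namespace NthL
variable {k m : ℕ}

/-- Matrix mulVec as a map on Euclidean spaces. -/
noncomputable def mvE (A : Matrix (Fin m) (Fin k) ℂ) (x : EuclideanSpace ℂ (Fin k)) :
    EuclideanSpace ℂ (Fin m) :=
  (WithLp.equiv 2 _).symm (A *ᵥ (WithLp.equiv 2 _ x))

/-- Quadratic form of a square matrix on Euclidean space. -/
noncomputable def qf (A : Matrix (Fin k) (Fin k) ℂ) (x : EuclideanSpace ℂ (Fin k)) : ℝ :=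
  RCLike.re (inner ℂ x (mvE A x) : ℂ)

lemma inner_eq_dot (x y : EuclideanSpace ℂ (Fin m)) :
    (inner ℂ x y : ℂ) = star (WithLp.equiv 2 _ x) ⬝ᵥ (WithLp.equiv 2 _ y) := by
  simp [PiLp.inner_apply, dotProduct, RCLike.inner_apply, mul_comm]

lemma inner_mvE (A : Matrix (Fin m) (Fin k) ℂ) (x : EuclideanSpace ℂ (Fin m))
    (y : EuclideanSpace ℂ (Fin k)) :
    (inner ℂ x (mvE A y) : ℂ) = star (WithLp.equiv 2 _ x) ⬝ᵥ (A *ᵥ (WithLp.equiv 2 _ y)) := by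
  rw [inner_eq_dot]; rfl

lemma inner_mvE_adjoint (C : Matrix (Fin m) (Fin k) ℂ) (x : EuclideanSpace ℂ (Fin m))
    (z : EuclideanSpace ℂ (Fin k)) :
    (inner ℂ x (mvE C z) : ℂ) = inner ℂ (mvE Cᴴ x) z := by
  rw [inner_mvE, inner_eq_dot]
  have h1 : (WithLp.equiv 2 _) (mvE Cᴴ x) = Cᴴ *ᵥ (WithLp.equiv 2 _ x) := rfl
  rw [h1, star_mulVec, conjTranspose_conjTranspose, Matrix.dotProduct_mulVec]

lemma mvE_add (A : Matrix (Fin m) (Fin k) ℂ) (x y : EuclideanSpace ℂ (Fin k)) :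
    mvE A (x + y) = mvE A x + mvE A y := by
  simp [mvE, mulVec_add]

lemma mvE_smul (A : Matrix (Fin m) (Fin k) ℂ) (c : ℂ) (x : EuclideanSpace ℂ (Fin k)) :
    mvE A (c • x) = c • mvE A x := by
  simp [mvE, mulVec_smul]

/-- `mvE` as a linear map. -/
noncomputable def mvL (A : Matrix (Fin m) (Fin k) ℂ) :
    EuclideanSpace ℂ (Fin k) →ₗ[ℂ] EuclideanSpace ℂ (Fin m) where
  toFun := mvE A
  map_add' := mvE_add A
  map_smul' := mvE_smul A

lemma mvE_sum {ι : Type*} (A : Matrix (Fin m) (Fin k) ℂ) (s : Finset ι)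
    (g : ι → EuclideanSpace ℂ (Fin k)) :
    mvE A (∑ i ∈ s, g i) = ∑ i ∈ s, mvE A (g i) := map_sum (mvL A) g s

end NthL

namespace NthL
variable {k m : ℕ}

lemma mvE_mul {l : ℕ} (A : Matrix (Fin l) (Fin m) ℂ) (B : Matrix (Fin m) (Fin k) ℂ)
    (x : EuclideanSpace ℂ (Fin k)) : mvE A (mvE B x) = mvE (A * B) x := by
  simp [mvE, mulVec_mulVec]

lemma inner_mvE_adjoint' (C : Matrix (Fin m) (Fin k) ℂ) (z : EuclideanSpace ℂ (Fin k))
    (x : EuclideanSpace ℂ (Fin m)) :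
    (inner ℂ (mvE C z) x : ℂ) = inner ℂ z (mvE Cᴴ x) := by
  rw [← inner_conj_symm, inner_mvE_adjoint, ← inner_conj_symm (mvE Cᴴ x)]
  exact Complex.conj_conj _

lemma norm_mvE_sq (C : Matrix (Fin m) (Fin k) ℂ) (w : EuclideanSpace ℂ (Fin k)) :
    ‖mvE C w‖ ^ 2 = qf (Cᴴ * C) w := by
  rw [← inner_self_eq_norm_sq (𝕜 := ℂ), qf]
  rw [inner_mvE_adjoint' C w (mvE C w), mvE_mul]

lemma qf_CCH (C : Matrix (Fin m) (Fin k) ℂ) (w : EuclideanSpace ℂ (Fin k)) :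
    qf (C * Cᴴ) (mvE C w) = ‖mvE (Cᴴ * C) w‖ ^ 2 := by
  rw [qf, ← mvE_mul C Cᴴ (mvE C w), inner_mvE_adjoint C (mvE C w) (mvE Cᴴ (mvE C w)),
    mvE_mul Cᴴ C w, ← inner_self_eq_norm_sq (𝕜 := ℂ)]

variable {ι : Type*} [Fintype ι]

lemma norm_sq_repr {v : ι → EuclideanSpace ℂ (Fin k)} (hv : Orthonormal ℂ v) (cf : ι → ℂ) :
    ‖∑ i, cf i • v i‖ ^ 2 = ∑ i, Complex.normSq (cf i) := by
  rw [← inner_self_eq_norm_sq (𝕜 := ℂ), hv.inner_sum]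
  rw [map_sum]
  refine Finset.sum_congr rfl fun i _ => ?_
  have : (starRingEnd ℂ) (cf i) * cf i = ((Complex.normSq (cf i) : ℝ) : ℂ) := by
    rw [mul_comm, Complex.mul_conj]
  rw [this]; exact Complex.ofReal_re _

lemma qf_repr {A : Matrix (Fin k) (Fin k) ℂ} {v : ι → EuclideanSpace ℂ (Fin k)}
    (hv : Orthonormal ℂ v) {g : ι → ℝ} (hg : ∀ i, mvE A (v i) = (g i : ℂ) • v i) (cf : ι → ℂ) :
    qf A (∑ i, cf i • v i) = ∑ i, g i * Complex.normSq (cf i) := by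
  have hAx : mvE A (∑ i, cf i • v i) = ∑ i, ((g i : ℂ) * cf i) • v i := by
    rw [mvE_sum]
    refine Finset.sum_congr rfl fun i _ => ?_
    rw [mvE_smul, hg i, smul_smul, mul_comm (cf i)]
  rw [qf, hAx, hv.inner_sum, map_sum]
  refine Finset.sum_congr rfl fun i _ => ?_
  have : (starRingEnd ℂ) (cf i) * ((g i : ℂ) * cf i)
      = ((g i : ℝ) : ℂ) * ((Complex.normSq (cf i) : ℝ) : ℂ) := by
    rw [← Complex.mul_conj]; ring
  rw [this, ← Complex.ofReal_mul]; exact Complex.ofReal_re _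

lemma exists_ne_zero_mem_inf {n : ℕ} (U V : Submodule ℂ (EuclideanSpace ℂ (Fin n)))
    (h : n < Module.finrank ℂ U + Module.finrank ℂ V) :
    ∃ x : EuclideanSpace ℂ (Fin n), x ∈ U ∧ x ∈ V ∧ x ≠ 0 := by
  have hsum := Submodule.finrank_sup_add_finrank_inf_eq U V
  have hle : Module.finrank ℂ ↥(U ⊔ V) ≤ n := by
    have := Submodule.finrank_le (U ⊔ V)
    rwa [finrank_euclideanSpace_fin] at this
  have hpos : 0 < Module.finrank ℂ ↥(U ⊓ V) := by omega
  have : Nontrivial ↥(U ⊓ V) := Module.nontrivial_of_finrank_pos hpos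
  obtain ⟨x, hx⟩ := exists_ne (0 : ↥(U ⊓ V))
  exact ⟨x, (Submodule.mem_inf.mp x.2).1, (Submodule.mem_inf.mp x.2).2,
    fun h0 => hx (Subtype.ext h0)⟩

end NthL

namespace NthL
open Module Submodule

lemma mvE_eigen {n : ℕ} {A : Matrix (Fin n) (Fin n) ℂ} (hA : A.IsHermitian) (j : Fin n) :
    mvE A (hA.eigenvectorBasis j) = ((hA.eigenvalues j : ℝ) : ℂ) • hA.eigenvectorBasis j := by
  have h := hA.mulVec_eigenvectorBasis j
  have : mvE A (hA.eigenvectorBasis j)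
      = (WithLp.equiv 2 _).symm (A *ᵥ (WithLp.equiv 2 _) (hA.eigenvectorBasis j)) := rfl
  rw [this]
  show (WithLp.equiv 2 _).symm (A *ᵥ (hA.eigenvectorBasis j).ofLp) = _
  rw [h]
  ext i
  simp [Pi.smul_apply, Complex.real_smul]

end NthL

namespace NthL
open Module Submodule

lemma L1 {n : ℕ} {A : Matrix (Fin n) (Fin n) ℂ} (hA : A.IsHermitian) {r : ℕ}
    (h1 : 1 ≤ r) (h2 : r ≤ n) {c : ℝ} (U : Submodule ℂ (EuclideanSpace ℂ (Fin n)))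
    (hU : r ≤ finrank ℂ U) (hq : ∀ x ∈ U, c * ‖x‖ ^ 2 ≤ qf A x) :
    c ≤ nthLargest hA.eigenvalues r := by
  classical
  obtain ⟨T, hTc, hTle⟩ := exists_bot hA.eigenvalues h1 h2
  set w : {i // i ∈ T} → EuclideanSpace ℂ (Fin n) := fun i => hA.eigenvectorBasis i.1 with hwdef
  have hw : Orthonormal ℂ w := hA.eigenvectorBasis.orthonormal.comp _ Subtype.val_injective
  set V := Submodule.span ℂ (Set.range w) with hVdef
  have hV : finrank ℂ V = n - r + 1 := by
    rw [hVdef, finrank_span_eq_card hw.linearIndependent, Fintype.card_coe, hTc]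
  obtain ⟨x, hxU, hxV, hx0⟩ := exists_ne_zero_mem_inf U V (by omega)
  obtain ⟨cf, hcf⟩ := (mem_span_range_iff_exists_fun ℂ).mp hxV
  have hqf : qf A x = ∑ i, hA.eigenvalues i.1 * Complex.normSq (cf i) := by
    rw [← hcf]; exact qf_repr hw (fun i => mvE_eigen hA i.1) cf
  have hnx : ‖x‖ ^ 2 = ∑ i, Complex.normSq (cf i) := by
    rw [← hcf]; exact norm_sq_repr hw cf
  have hb : qf A x ≤ nthLargest hA.eigenvalues r * ‖x‖ ^ 2 := by
    rw [hqf, hnx, Finset.mul_sum]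
    exact Finset.sum_le_sum fun i _ =>
      mul_le_mul_of_nonneg_right (hTle i.1 i.2) (Complex.normSq_nonneg _)
  have hpos : 0 < ‖x‖ ^ 2 := pow_pos (norm_pos_iff.mpr hx0) 2
  nlinarith [hq x hxU]

lemma L2 {n : ℕ} {A : Matrix (Fin n) (Fin n) ℂ} (hA : A.IsHermitian) {r : ℕ}
    (h1 : 1 ≤ r) (h2 : r ≤ n) {c : ℝ} (V : Submodule ℂ (EuclideanSpace ℂ (Fin n)))
    (hV : n - r + 1 ≤ finrank ℂ V) (hq : ∀ x ∈ V, qf A x ≤ c * ‖x‖ ^ 2) :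
    nthLargest hA.eigenvalues r ≤ c := by
  classical
  obtain ⟨S, hSc, hSge⟩ := exists_top hA.eigenvalues h1 h2
  set w : {i // i ∈ S} → EuclideanSpace ℂ (Fin n) := fun i => hA.eigenvectorBasis i.1 with hwdef
  have hw : Orthonormal ℂ w := hA.eigenvectorBasis.orthonormal.comp _ Subtype.val_injective
  set U := Submodule.span ℂ (Set.range w) with hUdef
  have hU : finrank ℂ U = r := by
    rw [hUdef, finrank_span_eq_card hw.linearIndependent, Fintype.card_coe, hSc]
  obtain ⟨x, hxU, hxV, hx0⟩ := exists_ne_zero_mem_inf U V (by omega)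
  obtain ⟨cf, hcf⟩ := (mem_span_range_iff_exists_fun ℂ).mp hxU
  have hqf : qf A x = ∑ i, hA.eigenvalues i.1 * Complex.normSq (cf i) := by
    rw [← hcf]; exact qf_repr hw (fun i => mvE_eigen hA i.1) cf
  have hnx : ‖x‖ ^ 2 = ∑ i, Complex.normSq (cf i) := by
    rw [← hcf]; exact norm_sq_repr hw cf
  have hb : nthLargest hA.eigenvalues r * ‖x‖ ^ 2 ≤ qf A x := by
    rw [hqf, hnx, Finset.mul_sum]
    exact Finset.sum_le_sum fun i _ =>
      mul_le_mul_of_nonneg_right (hSge i.1 i.2) (Complex.normSq_nonneg _)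
  have hpos : 0 < ‖x‖ ^ 2 := pow_pos (norm_pos_iff.mpr hx0) 2
  nlinarith [hq x hxV]

end NthL

namespace NthL
open Module Submodule
variable {k m : ℕ}

lemma qf_sub (A B : Matrix (Fin k) (Fin k) ℂ) (x : EuclideanSpace ℂ (Fin k)) :
    qf (A - B) x = qf A x - qf B x := by
  have h : mvE (A - B) x = mvE A x - mvE B x := by
    simp [mvE, Matrix.sub_mulVec]
  rw [qf, h, inner_sub_right, map_sub]; rfl

lemma qf_smul_real (a : ℝ) (A : Matrix (Fin k) (Fin k) ℂ) (x : EuclideanSpace ℂ (Fin k)) :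
    qf (a • A) x = a * qf A x := by
  have h : mvE (a • A) x = (a : ℂ) • mvE A x := by
    have h0 : mvE (a • A) x = (WithLp.equiv 2 _).symm ((a • A) *ᵥ (WithLp.equiv 2 _ x)) := rfl
    rw [h0, Matrix.smul_mulVec]
    ext i
    simp [Complex.real_smul, mvE]
  rw [qf, h, inner_smul_right]
  exact Complex.re_ofReal_mul _ _

lemma qf_smul_ofReal (a : ℝ) (A : Matrix (Fin k) (Fin k) ℂ) (x : EuclideanSpace ℂ (Fin k)) :
    qf ((a : ℂ) • A) x = a * qf A x := by
  have h : mvE ((a : ℂ) • A) x = (a : ℂ) • mvE A x := by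
    have h0 : mvE ((a:ℂ) • A) x = (WithLp.equiv 2 _).symm (((a:ℂ) • A) *ᵥ (WithLp.equiv 2 _ x)) := rfl
    rw [h0, Matrix.smul_mulVec]
    rfl
  rw [qf, h, inner_smul_right]
  exact Complex.re_ofReal_mul _ _

lemma qf_nonneg_of_psd {M : Matrix (Fin k) (Fin k) ℂ} (hM : M.PosSemidef)
    (x : EuclideanSpace ℂ (Fin k)) : 0 ≤ qf M x := by
  have h := hM.dotProduct_mulVec_nonneg ((WithLp.equiv 2 _) x)
  rw [qf, inner_mvE]
  exact (Complex.le_def.mp h).1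

lemma mvE_diagonal (v : Fin k → ℂ) (l : Fin k) :
    mvE (Matrix.diagonal v) (EuclideanSpace.single l (1 : ℂ)) = v l • EuclideanSpace.single l 1 := by
  ext j
  show (Matrix.diagonal v *ᵥ ((WithLp.equiv 2 _) (EuclideanSpace.single l (1:ℂ)))) j = _
  rw [Matrix.mulVec_diagonal]
  simp only [PiLp.smul_apply, smul_eq_mul]
  have h1 : (WithLp.equiv 2 _) (EuclideanSpace.single l (1:ℂ)) j
      = (EuclideanSpace.single l (1:ℂ) : EuclideanSpace ℂ (Fin k)) j := rfl
  rw [h1]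
  simp only [EuclideanSpace.single_apply]
  by_cases hj : j = l <;> simp [hj]

lemma finrank_comap_ge {a b : ℕ} (f : EuclideanSpace ℂ (Fin a) →ₗ[ℂ] EuclideanSpace ℂ (Fin b))
    (W : Submodule ℂ (EuclideanSpace ℂ (Fin b))) :
    a - (b - finrank ℂ W) ≤ finrank ℂ (W.comap f) := by
  classical
  set g := W.mkQ.comp f with hg
  have hker : LinearMap.ker g = W.comap f := by
    ext x
    simp [hg, LinearMap.mem_ker, Submodule.Quotient.mk_eq_zero]
  have h1 := LinearMap.finrank_range_add_finrank_ker g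
  rw [hker] at h1
  rw [finrank_euclideanSpace_fin] at h1
  have h2 : finrank ℂ ↥(LinearMap.range g) ≤ finrank ℂ (EuclideanSpace ℂ (Fin b) ⧸ W) := by
    have := Submodule.finrank_le (LinearMap.range g)
    exact this
  have h3 := Submodule.finrank_quotient_add_finrank W
  rw [finrank_euclideanSpace_fin] at h3
  omega

end NthL

namespace NthL
open Module Submodule

lemma qf_CCH' {n q : ℕ} (C : Matrix (Fin n) (Fin q) ℂ) (x : EuclideanSpace ℂ (Fin n)) :
    qf (C * Cᴴ) x = ‖mvE Cᴴ x‖ ^ 2 := by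
  rw [qf, ← mvE_mul C Cᴴ x, inner_mvE_adjoint C x (mvE Cᴴ x),
    ← inner_self_eq_norm_sq (𝕜 := ℂ)]

lemma K_bounds {q : ℕ} {K : Matrix (Fin q) (Fin q) ℂ} (hK : K.IsHermitian)
    (μ : Fin q → ℝ) (slo shi : ℝ) (hslo : 0 ≤ slo) (hshi : 0 ≤ shi)
    (hlo : ∀ x, slo * qf (Matrix.diagonal (fun l => (μ l : ℂ))) x ≤ qf K x)
    (hhi : ∀ x, qf K x ≤ shi * qf (Matrix.diagonal (fun l => (μ l : ℂ))) x)
    {r : ℕ} (h1 : 1 ≤ r) (h2 : r ≤ q) :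
    slo * nthLargest μ r ≤ nthLargest hK.eigenvalues r ∧
      nthLargest hK.eigenvalues r ≤ shi * nthLargest μ r := by
  classical
  set D2 := Matrix.diagonal (fun l => (μ l : ℂ)) with hD2
  have hbase : ∀ l : Fin q, mvE D2 ((EuclideanSpace.basisFun (Fin q) ℂ) l)
      = ((μ l : ℝ) : ℂ) • (EuclideanSpace.basisFun (Fin q) ℂ) l := by
    intro l
    rw [EuclideanSpace.basisFun_apply]
    exact mvE_diagonal _ l
  constructor
  · -- lower bound via L1
    obtain ⟨S, hSc, hSge⟩ := exists_top μ h1 h2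
    set w : {i // i ∈ S} → EuclideanSpace ℂ (Fin q) :=
      fun i => (EuclideanSpace.basisFun (Fin q) ℂ) i.1 with hwdef
    have hw : Orthonormal ℂ w :=
      (EuclideanSpace.basisFun (Fin q) ℂ).orthonormal.comp _ Subtype.val_injective
    refine L1 hK h1 h2 (Submodule.span ℂ (Set.range w)) ?_ ?_
    · rw [finrank_span_eq_card hw.linearIndependent, Fintype.card_coe, hSc]
    · intro x hx
      obtain ⟨cf, hcf⟩ := (mem_span_range_iff_exists_fun ℂ).mp hx
      have hqf : qf D2 x = ∑ i, μ i.1 * Complex.normSq (cf i) := by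
        rw [← hcf]; exact qf_repr hw (fun i => hbase i.1) cf
      have hnx : ‖x‖ ^ 2 = ∑ i, Complex.normSq (cf i) := by
        rw [← hcf]; exact norm_sq_repr hw cf
      have hD2ge : nthLargest μ r * ‖x‖ ^ 2 ≤ qf D2 x := by
        rw [hqf, hnx, Finset.mul_sum]
        exact Finset.sum_le_sum fun i _ =>
          mul_le_mul_of_nonneg_right (hSge i.1 i.2) (Complex.normSq_nonneg _)
      calc slo * nthLargest μ r * ‖x‖ ^ 2 = slo * (nthLargest μ r * ‖x‖ ^ 2) := by ring
        _ ≤ slo * qf D2 x := mul_le_mul_of_nonneg_left hD2ge hslo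
        _ ≤ qf K x := hlo x
  · -- upper bound via L2
    obtain ⟨T, hTc, hTle⟩ := exists_bot μ h1 h2
    set w : {i // i ∈ T} → EuclideanSpace ℂ (Fin q) :=
      fun i => (EuclideanSpace.basisFun (Fin q) ℂ) i.1 with hwdef
    have hw : Orthonormal ℂ w :=
      (EuclideanSpace.basisFun (Fin q) ℂ).orthonormal.comp _ Subtype.val_injective
    refine L2 hK h1 h2 (Submodule.span ℂ (Set.range w)) ?_ ?_
    · rw [finrank_span_eq_card hw.linearIndependent, Fintype.card_coe, hTc]
    · intro x hx
      obtain ⟨cf, hcf⟩ := (mem_span_range_iff_exists_fun ℂ).mp hx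
      have hqf : qf D2 x = ∑ i, μ i.1 * Complex.normSq (cf i) := by
        rw [← hcf]; exact qf_repr hw (fun i => hbase i.1) cf
      have hnx : ‖x‖ ^ 2 = ∑ i, Complex.normSq (cf i) := by
        rw [← hcf]; exact norm_sq_repr hw cf
      have hD2le : qf D2 x ≤ nthLargest μ r * ‖x‖ ^ 2 := by
        rw [hqf, hnx, Finset.mul_sum]
        exact Finset.sum_le_sum fun i _ =>
          mul_le_mul_of_nonneg_right (hTle i.1 i.2) (Complex.normSq_nonneg _)
      calc qf K x ≤ shi * qf D2 x := hhi x
        _ ≤ shi * (nthLargest μ r * ‖x‖ ^ 2) := mul_le_mul_of_nonneg_left hD2le hshi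
        _ = shi * nthLargest μ r * ‖x‖ ^ 2 := by ring

end NthL

namespace NthL
open Module Submodule

lemma mvE_sq_eigen {q : ℕ} {K : Matrix (Fin q) (Fin q) ℂ} (hK : K.IsHermitian) (j : Fin q) :
    mvE (K * K) (hK.eigenvectorBasis j)
      = ((hK.eigenvalues j * hK.eigenvalues j : ℝ) : ℂ) • hK.eigenvectorBasis j := by
  rw [← mvE_mul K K, mvE_eigen hK j, mvE_smul, mvE_eigen hK j, smul_smul, ← Complex.ofReal_mul]

lemma transfer {n q : ℕ} (C : Matrix (Fin n) (Fin q) ℂ) (hS : (C * Cᴴ).IsHermitian)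
    (hK : (Cᴴ * C).IsHermitian) {r : ℕ} (h1 : 1 ≤ r) (h2 : r ≤ q) (hqn : q ≤ n)
    (hpos : 0 < nthLargest hK.eigenvalues r) :
    nthLargest hS.eigenvalues r = nthLargest hK.eigenvalues r := by
  classical
  set κ := hK.eigenvalues with hκ
  set t := nthLargest κ r with htdef
  have hw0 : Orthonormal ℂ (⇑hK.eigenvectorBasis) := hK.eigenvectorBasis.orthonormal
  apply le_antisymm
  · -- upper: L2
    obtain ⟨T, hTc, hTle⟩ := exists_bot κ h1 h2
    set w : {i // i ∈ T} → EuclideanSpace ℂ (Fin q) := fun i => hK.eigenvectorBasis i.1 with hwdef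
    have hw : Orthonormal ℂ w := hw0.comp _ Subtype.val_injective
    set W := Submodule.span ℂ (Set.range w) with hWdef
    have hWrank : finrank ℂ W = q - r + 1 := by
      rw [hWdef, finrank_span_eq_card hw.linearIndependent, Fintype.card_coe, hTc]
    refine L2 hS h1 (h2.trans hqn) (W.comap (mvL Cᴴ)) ?_ ?_
    · have hfr := finrank_comap_ge (mvL Cᴴ) W
      rw [hWrank] at hfr
      exact le_trans (by omega) hfr
    · intro x hx
      have hz : mvE Cᴴ x ∈ W := hx
      set z := mvE Cᴴ x with hzdef
      obtain ⟨cf, hcf⟩ := (mem_span_range_iff_exists_fun ℂ).mp hz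
      have hqfx : qf (C * Cᴴ) x = ‖z‖ ^ 2 := qf_CCH' C x
      have hCz : ‖mvE C z‖ ^ 2 = qf (Cᴴ * C) z := norm_mvE_sq C z
      have hqfz : qf (Cᴴ * C) z = ∑ i, κ i.1 * Complex.normSq (cf i) := by
        rw [← hcf]; exact qf_repr hw (fun i => mvE_eigen hK i.1) cf
      have hnz : ‖z‖ ^ 2 = ∑ i, Complex.normSq (cf i) := by
        rw [← hcf]; exact norm_sq_repr hw cf
      have hCzle : ‖mvE C z‖ ^ 2 ≤ t * ‖z‖ ^ 2 := by
        rw [hCz, hqfz, hnz, Finset.mul_sum]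
        exact Finset.sum_le_sum fun i _ =>
          mul_le_mul_of_nonneg_right (hTle i.1 i.2) (Complex.normSq_nonneg _)
      have hcs : ‖z‖ ^ 2 ≤ ‖x‖ * ‖mvE C z‖ := by
        have h0 : (inner ℂ x (mvE C z) : ℂ) = inner ℂ z z := by
          rw [inner_mvE_adjoint C x z, ← hzdef]
        have h1 := re_inner_le_norm (𝕜 := ℂ) x (mvE C z)
        rw [h0, inner_self_eq_norm_sq] at h1
        exact h1
      rw [hqfx]
      have hsq : (‖z‖ ^ 2) * (‖z‖ ^ 2) ≤ (‖x‖ * ‖mvE C z‖) * (‖x‖ * ‖mvE C z‖) :=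
        mul_self_le_mul_self (by positivity) hcs
      have h3 : ‖x‖ ^ 2 * ‖mvE C z‖ ^ 2 ≤ ‖x‖ ^ 2 * (t * ‖z‖ ^ 2) :=
        mul_le_mul_of_nonneg_left hCzle (sq_nonneg _)
      rcases eq_or_ne (‖z‖ ^ 2) 0 with hz0 | hz0
      · rw [hz0]; exact mul_nonneg hpos.le (sq_nonneg _)
      · have hzpos : 0 < ‖z‖ ^ 2 := lt_of_le_of_ne (sq_nonneg _) (Ne.symm hz0)
        nlinarith [hsq, h3, hzpos]
  · -- lower: L1
    obtain ⟨S, hSc, hSge⟩ := exists_top κ h1 h2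
    set w : {i // i ∈ S} → EuclideanSpace ℂ (Fin q) := fun i => hK.eigenvectorBasis i.1 with hwdef
    have hw : Orthonormal ℂ w := hw0.comp _ Subtype.val_injective
    set u : {i // i ∈ S} → EuclideanSpace ℂ (Fin n) := fun i => mvE C (w i) with hudef
    have hsum : ∀ cf : {i // i ∈ S} → ℂ, (∑ i, cf i • u i) = mvE C (∑ i, cf i • w i) := by
      intro cf
      rw [mvE_sum]
      exact Finset.sum_congr rfl fun i _ => (mvE_smul C (cf i) (w i)).symm
    have hqfK : ∀ cf : {i // i ∈ S} → ℂ,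
        qf (Cᴴ * C) (∑ i, cf i • w i) = ∑ i, κ i.1 * Complex.normSq (cf i) :=
      fun cf => qf_repr hw (fun i => mvE_eigen hK i.1) cf
    have hlin : LinearIndependent ℂ u := by
      rw [Fintype.linearIndependent_iff]
      intro g hg i
      have hCy : mvE C (∑ i, g i • w i) = 0 := by rw [← hsum]; exact hg
      have h0 : qf (Cᴴ * C) (∑ i, g i • w i) = 0 := by
        rw [← norm_mvE_sq, hCy]; simp
      rw [hqfK] at h0
      have hterm := (Finset.sum_eq_zero_iff_of_nonneg (fun i _ =>
        mul_nonneg ((hpos.trans_le (hSge i.1 i.2)).le) (Complex.normSq_nonneg _))).mp h0 i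
        (Finset.mem_univ i)
      have hκpos : 0 < κ i.1 := hpos.trans_le (hSge i.1 i.2)
      have := mul_eq_zero.mp hterm
      rcases this with h | h
      · exact absurd h hκpos.ne'
      · exact Complex.normSq_eq_zero.mp h
    refine L1 hS h1 (h2.trans hqn) (Submodule.span ℂ (Set.range u)) ?_ ?_
    · rw [finrank_span_eq_card hlin, Fintype.card_coe, hSc]
    · intro x hx
      obtain ⟨cf, hcf⟩ := (mem_span_range_iff_exists_fun ℂ).mp hx
      set y := ∑ i, cf i • w i with hydef
      have hxy : x = mvE C y := by rw [← hcf]; exact hsum cf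
      have hqfx : qf (C * Cᴴ) x = ∑ i, (κ i.1 * κ i.1) * Complex.normSq (cf i) := by
        rw [hxy, qf_CCH' C (mvE C y), mvE_mul Cᴴ C y, norm_mvE_sq (Cᴴ * C) y, hK.eq, hydef]
        exact qf_repr hw (fun i => mvE_sq_eigen hK i.1) cf
      have hnx : ‖x‖ ^ 2 = ∑ i, κ i.1 * Complex.normSq (cf i) := by
        rw [hxy, norm_mvE_sq C y]
        exact hqfK cf
      rw [hqfx, hnx, Finset.mul_sum]
      exact Finset.sum_le_sum fun i _ => by
        have hge := hSge i.1 i.2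
        have hns := Complex.normSq_nonneg (cf i)
        nlinarith [mul_nonneg (sub_nonneg.mpr hge) (mul_nonneg (hpos.trans_le hge).le hns)]

end NthL

namespace NthL
open Module Submodule

lemma zero_part {n q : ℕ} (C : Matrix (Fin n) (Fin q) ℂ) (hS : (C * Cᴴ).IsHermitian)
    {r : ℕ} (hr1 : q + 1 ≤ r) (hrn : r ≤ n) :
    nthLargest hS.eigenvalues r = 0 := by
  classical
  have h1 : 1 ≤ r := by omega
  apply le_antisymm
  · -- upper bound via L2 with kernel of Cᴴ
    have hL2 := L2 hS h1 hrn (c := 0) (LinearMap.ker (mvL Cᴴ)) ?_ ?_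
    · simpa using hL2
    · have hrk := LinearMap.finrank_range_add_finrank_ker (mvL Cᴴ)
      rw [finrank_euclideanSpace_fin] at hrk
      have hrange : finrank ℂ ↥(LinearMap.range (mvL Cᴴ)) ≤ q := by
        have := Submodule.finrank_le (LinearMap.range (mvL Cᴴ))
        rwa [finrank_euclideanSpace_fin] at this
      omega
    · intro x hx
      have hz : mvE Cᴴ x = 0 := hx
      rw [qf_CCH' C x, hz]
      simp
  · obtain ⟨i, hi⟩ := nthLargest_mem hS.eigenvalues h1 hrn
    rw [hi]
    exact (Matrix.posSemidef_self_mul_conjTranspose C).eigenvalues_nonneg i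

end NthL

open NthL Module Submodule

/-- Lemma 1, case (a): eigenvalue bounds for the common-component spectral density when the
long-memory parameters vary across factors. -/
theorem stmt_0
    (n q : ℕ) (hq : 1 ≤ q) (hqn : q ≤ n)
    (θ : ℝ) (hθmem : θ ∈ Set.Icc (-π) π) (hθ : θ ≠ 0)
    (sm sp : ℝ) (hsm : 0 < sm) (hsp : sm ≤ sp)
    (G : Matrix (Fin n) (Fin q) ℂ)
    (hlow : ((n : ℝ)⁻¹ • (Gᴴ * G) - (sm : ℂ) • (1 : Matrix (Fin q) (Fin q) ℂ)).PosSemidef)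
    (hup : ((sp : ℂ) • (1 : Matrix (Fin q) (Fin q) ℂ) - (n : ℝ)⁻¹ • (Gᴴ * G)).PosSemidef)
    (d : Fin q → ℝ) (hd : ∀ l, d l ∈ Set.Ico (0 : ℝ) (1 / 2))
    (Dbar : Matrix (Fin q) (Fin q) ℂ)
    (hDbar : Dbar = Matrix.diagonal fun l =>
      ((‖1 - Complex.exp (-(θ : ℂ) * Complex.I)‖ ^ (-(d l)) : ℝ) : ℂ))
    (Schi : Matrix (Fin n) (Fin n) ℂ)
    (hSchi : Schi = G * (Dbar * Dbar) * Gᴴ) :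
    (∀ r : ℕ, 1 ≤ r → r ≤ q →
      (n : ℝ) * sm *
          nthLargest
            (fun l => ‖1 - Complex.exp (-(θ : ℂ) * Complex.I)‖ ^ (-2 * d l)) r
        ≤ eigsDesc Schi r ∧
      eigsDesc Schi r ≤
        (n : ℝ) * sp *
          nthLargest
            (fun l => ‖1 - Complex.exp (-(θ : ℂ) * Complex.I)‖ ^ (-2 * d l)) r) ∧
    (∀ r : ℕ, q + 1 ≤ r → r ≤ n → eigsDesc Schi r = 0) := by
  classical
  set μ : Fin q → ℝ :=
    fun l => ‖1 - Complex.exp (-(θ : ℂ) * Complex.I)‖ ^ (-2 * d l) with hμdef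
  -- positivity of the base
  have hexp : Complex.exp (-(θ : ℂ) * Complex.I) ≠ 1 := by
    intro h
    obtain ⟨k, hk⟩ := Complex.exp_eq_one_iff.mp h
    have hkc : (-(θ : ℂ)) = (k : ℂ) * (2 * (π : ℂ)) :=
      mul_right_cancel₀ Complex.I_ne_zero (by rw [hk]; ring)
    have hkr : (-θ : ℝ) = (k : ℝ) * (2 * π) := by exact_mod_cast hkc
    have hπ := Real.pi_pos
    have hmem1 := hθmem.1
    have hmem2 := hθmem.2
    rcases lt_trichotomy k 0 with hk0 | hk0 | hk0
    · have : (k : ℝ) ≤ -1 := by exact_mod_cast (by omega : k ≤ -1)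
      nlinarith
    · apply hθ
      rw [hk0] at hkr
      push_cast at hkr
      linarith
    · have : (1 : ℝ) ≤ (k : ℝ) := by exact_mod_cast (by omega : 1 ≤ k)
      nlinarith
  have hc0 : 0 < ‖1 - Complex.exp (-(θ : ℂ) * Complex.I)‖ :=
    norm_pos_iff.mpr (sub_ne_zero.mpr (Ne.symm hexp))
  have hμpos : ∀ l, 0 < μ l := fun l => Real.rpow_pos_of_pos hc0 _
  -- matrix setup
  have hDH : Dbarᴴ = Dbar := by
    have hstar : star (fun l => ((‖1 - Complex.exp (-(θ : ℂ) * Complex.I)‖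
          ^ (-(d l)) : ℝ) : ℂ))
        = fun l => ((‖1 - Complex.exp (-(θ : ℂ) * Complex.I)‖ ^ (-(d l)) : ℝ) : ℂ) := by
      funext l
      exact Complex.conj_ofReal _
    rw [hDbar, Matrix.diagonal_conjTranspose, hstar]
  have hD2 : Dbar * Dbar = Matrix.diagonal (fun l => ((μ l : ℝ) : ℂ)) := by
    rw [hDbar, Matrix.diagonal_mul_diagonal]
    have hfun : (fun i => ((‖1 - Complex.exp (-(θ : ℂ) * Complex.I)‖
            ^ (-(d i)) : ℝ) : ℂ)
          * ((‖1 - Complex.exp (-(θ : ℂ) * Complex.I)‖ ^ (-(d i)) : ℝ) : ℂ))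
        = fun l => ((μ l : ℝ) : ℂ) := by
      funext l
      rw [← Complex.ofReal_mul]
      congr 1
      rw [← Real.rpow_add hc0]
      simp only [hμdef]
      congr 1
      ring
    rw [hfun]
  set C := G * Dbar with hCdef
  have hCH : Cᴴ = Dbar * Gᴴ := by rw [hCdef, Matrix.conjTranspose_mul, hDH]
  have hSC : Schi = C * Cᴴ := by
    rw [hSchi, hCH, hCdef]
    simp only [Matrix.mul_assoc]
  have hKD : Cᴴ * C = Dbar * (Gᴴ * G) * Dbar := by
    rw [hCH, hCdef]
    simp only [Matrix.mul_assoc]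
  have hCC : (C * Cᴴ).IsHermitian := (Matrix.posSemidef_self_mul_conjTranspose C).1
  have hK : (Cᴴ * C).IsHermitian := (Matrix.posSemidef_conjTranspose_mul_self C).1
  have hED : ∀ r, eigsDesc Schi r = nthLargest hCC.eigenvalues r := by
    intro r
    rw [hSC]
    unfold eigsDesc
    rw [dif_pos hCC]
  -- sandwich inequalities
  have hn1 : (1 : ℝ) ≤ (n : ℝ) := by exact_mod_cast le_trans hq hqn
  have hnpos : (0 : ℝ) < n := by linarith
  set D2 := Matrix.diagonal (fun l => ((μ l : ℝ) : ℂ)) with hD2def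
  have hidlo : Dbar * ((n : ℝ)⁻¹ • (Gᴴ * G) - (sm : ℂ) • 1) * Dbar
      = (n : ℝ)⁻¹ • (Cᴴ * C) - (sm : ℂ) • D2 := by
    rw [hKD, ← hD2]
    simp only [Matrix.mul_sub, Matrix.sub_mul, Matrix.mul_smul, Matrix.smul_mul,
      Matrix.mul_one, Matrix.mul_assoc]
  have hidhi : Dbar * ((sp : ℂ) • 1 - (n : ℝ)⁻¹ • (Gᴴ * G)) * Dbar
      = (sp : ℂ) • D2 - (n : ℝ)⁻¹ • (Cᴴ * C) := by
    rw [hKD, ← hD2]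
    simp only [Matrix.mul_sub, Matrix.sub_mul, Matrix.mul_smul, Matrix.smul_mul,
      Matrix.mul_one, Matrix.mul_assoc]
  have hloP : ((n : ℝ)⁻¹ • (Cᴴ * C) - (sm : ℂ) • D2).PosSemidef := by
    rw [← hidlo]
    have := hlow.mul_mul_conjTranspose_same Dbar
    rwa [hDH] at this
  have hhiP : ((sp : ℂ) • D2 - (n : ℝ)⁻¹ • (Cᴴ * C)).PosSemidef := by
    rw [← hidhi]
    have := hup.mul_mul_conjTranspose_same Dbar
    rwa [hDH] at this
  have hloQ : ∀ x, ((n : ℝ) * sm) * qf D2 x ≤ qf (Cᴴ * C) x := by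
    intro x
    have h0 := qf_nonneg_of_psd hloP x
    rw [qf_sub, qf_smul_real, qf_smul_ofReal] at h0
    have h1 : sm * qf D2 x ≤ (n : ℝ)⁻¹ * qf (Cᴴ * C) x := by linarith
    calc (n : ℝ) * sm * qf D2 x = (n : ℝ) * (sm * qf D2 x) := by ring
      _ ≤ (n : ℝ) * ((n : ℝ)⁻¹ * qf (Cᴴ * C) x) :=
        mul_le_mul_of_nonneg_left h1 (by positivity)
      _ = qf (Cᴴ * C) x := by field_simp
  have hhiQ : ∀ x, qf (Cᴴ * C) x ≤ ((n : ℝ) * sp) * qf D2 x := by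
    intro x
    have h0 := qf_nonneg_of_psd hhiP x
    rw [qf_sub, qf_smul_real, qf_smul_ofReal] at h0
    have h1 : (n : ℝ)⁻¹ * qf (Cᴴ * C) x ≤ sp * qf D2 x := by linarith
    calc qf (Cᴴ * C) x = (n : ℝ) * ((n : ℝ)⁻¹ * qf (Cᴴ * C) x) := by field_simp
      _ ≤ (n : ℝ) * (sp * qf D2 x) := mul_le_mul_of_nonneg_left h1 (by positivity)
      _ = ((n : ℝ) * sp) * qf D2 x := by ring
  constructor
  · intro r hr1 hr2
    have hKb := K_bounds hK μ ((n : ℝ) * sm) ((n : ℝ) * sp)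
      (mul_nonneg hnpos.le hsm.le) (mul_nonneg hnpos.le (hsm.trans_le hsp).le) hloQ hhiQ hr1 hr2
    obtain ⟨i, hμr⟩ := nthLargest_mem μ hr1 hr2
    have hμrpos : 0 < nthLargest μ r := hμr ▸ hμpos i
    have htKpos : 0 < nthLargest hK.eigenvalues r :=
      lt_of_lt_of_le (mul_pos (mul_pos hnpos hsm) hμrpos) hKb.1
    have htrans := transfer C hCC hK hr1 hr2 hqn htKpos
    rw [hED r, htrans]
    exact hKb
  · intro r hr1 hr2
    rw [hED r]
    exact zero_part C hCC hr1 hr2
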